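/- arXiv:1712.03822 — 4 statements merged into one kernel-verified Lean document; each statement's English description precedes it below -/
import Mathlib

section
/- Let Q ⊆ ℝᵐ be nonempty, closed and convex, and A a real m×n matrix. The function f(x) = ½‖(I − P_Q)(Ax)‖² is differentiable with gradient ∇f(x) = Aᵗ(Ax − P_Q(Ax)), and ∇f is Lipschitz continuous with constant ‖A‖². -/
open RealInnerProductSpace

section Aux

variable {m : ℕ} {Q : Set (EuclideanSpace ℝ (Fin m))}
  {P : EuclideanSpace ℝ (Fin m) → EuclideanSpace ℝ (Fin m)}

/-- Variational characterization of the metric projection. -/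
lemma proj_var_ineq (hQcv : Convex ℝ Q)
    (hP : ∀ x, P x ∈ Q ∧ ∀ z ∈ Q, ‖x - P x‖ ≤ ‖x - z‖) (x : EuclideanSpace ℝ (Fin m)) :
    ∀ z ∈ Q, ⟪x - P x, z - P x⟫ ≤ 0 := by
  have hmem := (hP x).1
  have h := norm_eq_iInf_iff_real_inner_le_zero (u := x) hQcv hmem
  apply h.1
  haveI : Nonempty Q := ⟨⟨P x, hmem⟩⟩
  apply le_antisymm
  · exact le_ciInf fun w => (hP x).2 w w.2
  · exact ciInf_le ⟨0, fun _ ⟨_, h⟩ => h ▸ norm_nonneg _⟩ (⟨P x, hmem⟩ : Q)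

/-- Firm nonexpansiveness of `I - P`. -/
lemma proj_firm (hQcv : Convex ℝ Q)
    (hP : ∀ x, P x ∈ Q ∧ ∀ z ∈ Q, ‖x - P x‖ ≤ ‖x - z‖) (x y : EuclideanSpace ℝ (Fin m)) :
    ‖(x - P x) - (y - P y)‖ ^ 2 ≤ ⟪(x - P x) - (y - P y), x - y⟫ := by
  have h1 : ⟪x - P x, P y - P x⟫ ≤ 0 := proj_var_ineq hQcv hP x _ (hP y).1
  have h2 : ⟪y - P y, P x - P y⟫ ≤ 0 := proj_var_ineq hQcv hP y _ (hP x).1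
  have hxy : x - y = ((x - P x) - (y - P y)) + (P x - P y) := by abel
  have key : ⟪(x - P x) - (y - P y), x - y⟫ =
      ‖(x - P x) - (y - P y)‖ ^ 2 + (⟪x - P x, P x - P y⟫ - ⟪y - P y, P x - P y⟫) := by
    rw [hxy, inner_add_right, real_inner_self_eq_norm_sq,
      inner_sub_left ((x : EuclideanSpace ℝ (Fin m)) - P x) (y - P y) (P x - P y)]
  have h1' : 0 ≤ ⟪x - P x, P x - P y⟫ := by
    have hswap : (P x - P y : EuclideanSpace ℝ (Fin m)) = -(P y - P x) := by abel
    rw [hswap, inner_neg_right]; linarith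
  linarith

/-- Nonexpansiveness of `I - P`. -/
lemma proj_nonexp (hQcv : Convex ℝ Q)
    (hP : ∀ x, P x ∈ Q ∧ ∀ z ∈ Q, ‖x - P x‖ ≤ ‖x - z‖) (x y : EuclideanSpace ℝ (Fin m)) :
    ‖(x - P x) - (y - P y)‖ ≤ ‖x - y‖ := by
  have hf := proj_firm hQcv hP x y
  have hcs := real_inner_le_norm ((x - P x) - (y - P y)) (x - y)
  rcases le_or_gt ‖(x - P x) - (y - P y)‖ 0 with h | h
  · exact h.trans (norm_nonneg _)
  · nlinarith

/-- Gradient of `u ↦ (1/2)‖u - P u‖²`. -/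
lemma proj_sq_hasGradientAt (hQcv : Convex ℝ Q)
    (hP : ∀ x, P x ∈ Q ∧ ∀ z ∈ Q, ‖x - P x‖ ≤ ‖x - z‖) (u : EuclideanSpace ℝ (Fin m)) :
    HasGradientAt (fun v => (1 / 2) * ‖v - P v‖ ^ 2) (u - P u) u := by
  rw [hasGradientAt_iff_hasFDerivAt, hasFDerivAt_iff_isLittleO_nhds_zero]
  -- error bound: |f(u+h) - f(u) - ⟪u - P u, h⟫| ≤ (3/2)‖h‖²
  have bound : ∀ h : EuclideanSpace ℝ (Fin m),
      |(1 / 2) * ‖(u + h) - P (u + h)‖ ^ 2 - (1 / 2) * ‖u - P u‖ ^ 2 - ⟪u - P u, h⟫|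
        ≤ (3 / 2) * ‖h‖ ^ 2 := by
    intro h
    set v := u + h with hv
    have hvu : v - u = h := by rw [hv]; abel
    -- upper bound
    have hup : (1 / 2) * ‖v - P v‖ ^ 2 ≤ (1 / 2) * ‖v - P u‖ ^ 2 := by
      have := (hP v).2 (P u) (hP u).1
      nlinarith [norm_nonneg (v - P v), norm_nonneg (v - P u)]
    have hexp : ‖v - P u‖ ^ 2 = ‖u - P u‖ ^ 2 + 2 * ⟪u - P u, h⟫ + ‖h‖ ^ 2 := by
      have : (v - P u : EuclideanSpace ℝ (Fin m)) = (u - P u) + h := by rw [hv]; abel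
      rw [this, norm_add_sq_real]
    -- lower bound
    have hlow : (1 / 2) * ‖u - P u‖ ^ 2 ≤ (1 / 2) * ‖u - P v‖ ^ 2 := by
      have := (hP u).2 (P v) (hP v).1
      nlinarith [norm_nonneg (u - P u), norm_nonneg (u - P v)]
    have hexp2 : ‖u - P v‖ ^ 2 = ‖v - P v‖ ^ 2 - 2 * ⟪v - P v, h⟫ + ‖h‖ ^ 2 := by
      have : (u - P v : EuclideanSpace ℝ (Fin m)) = (v - P v) + (-h) := by rw [hv]; abel
      rw [this, norm_add_sq_real, inner_neg_right, norm_neg]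
      ring
    -- difference of inner products
    have hdiff : |⟪v - P v, h⟫ - ⟪u - P u, h⟫| ≤ ‖h‖ ^ 2 := by
      have heq : ⟪v - P v, h⟫ - ⟪u - P u, h⟫ = ⟪(v - P v) - (u - P u), h⟫ :=
        (inner_sub_left _ _ _).symm
      rw [heq]
      have hcs := abs_real_inner_le_norm ((v - P v) - (u - P u)) h
      have hne := proj_nonexp hQcv hP v u
      have : ‖(v - P v) - (u - P u)‖ * ‖h‖ ≤ ‖h‖ * ‖h‖ := by
        apply mul_le_mul_of_nonneg_right _ (norm_nonneg _)
        calc ‖(v - P v) - (u - P u)‖ ≤ ‖v - u‖ := hne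
        _ = ‖h‖ := by rw [hvu]
      nlinarith [sq_nonneg ‖h‖]
    rw [abs_le]
    constructor
    · -- lower:  f(v) - f(u) - ⟪u-Pu,h⟫ ≥ -(3/2)‖h‖²
      have h1 : (1 / 2) * ‖u - P u‖ ^ 2 ≤
          (1 / 2) * ‖v - P v‖ ^ 2 - ⟪v - P v, h⟫ + (1 / 2) * ‖h‖ ^ 2 := by
        calc (1 / 2) * ‖u - P u‖ ^ 2 ≤ (1 / 2) * ‖u - P v‖ ^ 2 := hlow
        _ = (1 / 2) * ‖v - P v‖ ^ 2 - ⟪v - P v, h⟫ + (1 / 2) * ‖h‖ ^ 2 := by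
            rw [hexp2]; ring
      have := abs_le.1 hdiff
      linarith [this.1]
    · have h1 : (1 / 2) * ‖v - P v‖ ^ 2 ≤
          (1 / 2) * ‖u - P u‖ ^ 2 + ⟪u - P u, h⟫ + (1 / 2) * ‖h‖ ^ 2 := by
        calc (1 / 2) * ‖v - P v‖ ^ 2 ≤ (1 / 2) * ‖v - P u‖ ^ 2 := hup
        _ = _ := by rw [hexp]; ring
      nlinarith [sq_nonneg ‖h‖]
  rw [Asymptotics.isLittleO_iff]
  intro c hc
  have : ∀ᶠ h : EuclideanSpace ℝ (Fin m) in nhds 0, ‖h‖ ≤ (2 / 3) * c := by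
    have : Metric.ball (0 : EuclideanSpace ℝ (Fin m)) ((2 / 3) * c) ∈ nhds 0 :=
      Metric.ball_mem_nhds _ (by positivity)
    filter_upwards [this] with h hh
    rw [Metric.mem_ball, dist_eq_norm, sub_zero] at hh
    exact hh.le
  filter_upwards [this] with h hh
  calc ‖(1 / 2) * ‖(u + h) - P (u + h)‖ ^ 2 - (1 / 2) * ‖u - P u‖ ^ 2 -
        (InnerProductSpace.toDual ℝ (EuclideanSpace ℝ (Fin m))) (u - P u) h‖
      = |(1 / 2) * ‖(u + h) - P (u + h)‖ ^ 2 - (1 / 2) * ‖u - P u‖ ^ 2 - ⟪u - P u, h⟫| := by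
        rw [Real.norm_eq_abs, InnerProductSpace.toDual_apply_apply]
    _ ≤ (3 / 2) * ‖h‖ ^ 2 := bound h
    _ ≤ c * ‖h‖ := by nlinarith [norm_nonneg h]

end Aux

theorem gradient_sfp_smooth_part (m n : ℕ)
    (Q : Set (EuclideanSpace ℝ (Fin m)))
    (hQne : Q.Nonempty) (hQcl : IsClosed Q) (hQcv : Convex ℝ Q)
    (P : EuclideanSpace ℝ (Fin m) → EuclideanSpace ℝ (Fin m))
    (hP : ∀ x, P x ∈ Q ∧ ∀ z ∈ Q, ‖x - P x‖ ≤ ‖x - z‖)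
    (A : EuclideanSpace ℝ (Fin n) →L[ℝ] EuclideanSpace ℝ (Fin m)) :
    (∀ x, HasGradientAt (fun x => (1 / 2) * ‖A x - P (A x)‖ ^ 2)
        (ContinuousLinearMap.adjoint A (A x - P (A x))) x) ∧
      LipschitzWith (‖A‖₊ ^ 2)
        (fun x => ContinuousLinearMap.adjoint A (A x - P (A x))) := by
  constructor
  · intro x
    have hh : HasGradientAt (fun v => (1 / 2) * ‖v - P v‖ ^ 2) (A x - P (A x)) (A x) :=
      proj_sq_hasGradientAt hQcv hP (A x)
    rw [hasGradientAt_iff_hasFDerivAt] at hh ⊢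
    have hA : HasFDerivAt (fun y => A y) A x := A.hasFDerivAt
    have hcomp := hh.comp x hA
    refine hcomp.congr_fderiv ?_
    ext y
    simp [ContinuousLinearMap.adjoint_inner_left, InnerProductSpace.toDual_apply_apply]
  · apply LipschitzWith.of_dist_le_mul
    intro x y
    rw [dist_eq_norm, dist_eq_norm]
    have h1 : (ContinuousLinearMap.adjoint A) (A x - P (A x)) -
        (ContinuousLinearMap.adjoint A) (A y - P (A y)) =
        (ContinuousLinearMap.adjoint A) ((A x - P (A x)) - (A y - P (A y))) := by
      simp [map_sub]
    rw [h1]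
    calc ‖(ContinuousLinearMap.adjoint A) ((A x - P (A x)) - (A y - P (A y)))‖
        ≤ ‖ContinuousLinearMap.adjoint A‖ * ‖(A x - P (A x)) - (A y - P (A y))‖ :=
          (ContinuousLinearMap.adjoint A).le_opNorm _
      _ ≤ ‖A‖ * ‖A x - A y‖ := by
          rw [LinearIsometryEquiv.norm_map]
          exact mul_le_mul_of_nonneg_left (proj_nonexp hQcv hP (A x) (A y)) (norm_nonneg _)
      _ ≤ ‖A‖ * (‖A‖ * ‖x - y‖) := by
          apply mul_le_mul_of_nonneg_left _ (norm_nonneg _)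
          simpa using A.le_opNorm (x - y)
      _ = (‖A‖₊ ^ 2 : NNReal) * ‖x - y‖ := by
          push_cast
          ring
end

section
/- Let r(x) = ‖x‖₁ − ‖x‖₂ on ℝⁿ, λ > 0, and y ∈ ℝⁿ with λ < ‖y‖_∞. Set z = prox_{λ‖·‖₁}(y) (the soft-thresholding of y by λ), which is nonzero. Then x* = ((λ + ‖z‖₂)/‖z‖₂)·z is a global minimizer of x ↦ λ r(x) + ½‖x − y‖². -/
theorem prox_l1_minus_l2_closed_form (n : ℕ) (lam : ℝ) (hlam : 0 < lam)
    (y : EuclideanSpace ℝ (Fin n)) (hly : lam < ⨆ i, |y i|) :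
    let z : EuclideanSpace ℝ (Fin n) := WithLp.toLp 2 (fun i => Real.sign (y i) * max (|y i| - lam) 0)
    let f : EuclideanSpace ℝ (Fin n) → ℝ :=
      fun x => lam * ((∑ i, |x i|) - ‖x‖) + (1 / 2) * ‖x - y‖ ^ 2
    z ≠ 0 ∧ ∀ x, f (((lam + ‖z‖) / ‖z‖) • z) ≤ f x := by
  intro z f
  have hz : ∀ i, z i = Real.sign (y i) * max (|y i| - lam) 0 := fun _ => rfl
  have hf : ∀ x : EuclideanSpace ℝ (Fin n),
      f x = lam * ((∑ i, |x i|) - ‖x‖) + (1 / 2) * ‖x - y‖ ^ 2 := fun _ => rfl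
  -- the vector m of thresholded magnitudes
  set m : Fin n → ℝ := fun i => max (|y i| - lam) 0 with hm_def
  have hm0 : ∀ i, 0 ≤ m i := fun i => le_max_right _ _
  -- existence of a large coordinate
  have hex : ∃ i, lam < |y i| := by
    by_contra hcon
    push_neg at hcon
    rcases Nat.eq_zero_or_pos n with h0 | h0
    · subst h0
      have : (⨆ i, |y i|) = 0 := Real.iSup_of_isEmpty _
      rw [this] at hly; linarith
    · haveI : Nonempty (Fin n) := ⟨⟨0, h0⟩⟩
      have := ciSup_le hcon
      linarith
  obtain ⟨i0, hi0⟩ := hex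
  -- z ≠ 0
  have hzne : z ≠ 0 := by
    intro h
    have hzi : z i0 = 0 := by rw [h]; rfl
    rw [hz i0] at hzi
    have hy0 : y i0 ≠ 0 := by
      intro h'; rw [h'] at hi0; simp at hi0; linarith
    have hs : Real.sign (y i0) ≠ 0 := by
      rcases hy0.lt_or_gt with h' | h'
      · rw [Real.sign_of_neg h']; norm_num
      · rw [Real.sign_of_pos h']; norm_num
    have hmx : max (|y i0| - lam) 0 = |y i0| - lam := max_eq_left (by linarith)
    rw [hmx] at hzi
    have : |y i0| - lam ≠ 0 := by intro h'; rw [h'] at hzi; linarith [hi0, sub_eq_zero.mp h']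
    exact this (by rcases mul_eq_zero.mp hzi with h' | h'; exact absurd h' hs; exact h')
  refine ⟨hzne, ?_⟩
  have hS : 0 < ‖z‖ := norm_pos_iff.mpr hzne
  -- norm squared as a sum
  have hnsq : ∀ v : EuclideanSpace ℝ (Fin n), ‖v‖ ^ 2 = ∑ i, (v i) ^ 2 := by
    intro v
    rw [EuclideanSpace.norm_eq, Real.sq_sqrt (by positivity)]
    simp [sq_abs]
  have hnsqrt : ∀ v : EuclideanSpace ℝ (Fin n), ‖v‖ = Real.sqrt (∑ i, (v i) ^ 2) := by
    intro v
    rw [← hnsq v, Real.sqrt_sq (norm_nonneg v)]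
  -- |z i| = m i
  have hzabs : ∀ i, |z i| = m i := by
    intro i
    rcases lt_trichotomy (y i) 0 with h | h | h
    · rw [hz i, Real.sign_of_neg h, neg_one_mul, abs_neg, abs_of_nonneg (hm0 i)]
    · rw [hz i, h, Real.sign_zero, zero_mul, abs_zero, hm_def]
      have : |y i| - lam ≤ 0 := by rw [h]; simp; linarith
      simp [h]
      linarith
    · rw [hz i, Real.sign_of_pos h, one_mul, abs_of_nonneg (hm0 i)]
  have hzm : ∀ i, z i = Real.sign (y i) * m i := fun _ => rfl
  -- z i * y i = m i ^ 2 + lam * m i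
  have hzy : ∀ i, z i * y i = (m i) ^ 2 + lam * m i := by
    intro i
    rcases le_or_gt (|y i|) lam with h | h
    · have hm : m i = 0 := max_eq_right (by linarith)
      rw [hzm i, hm]
      ring
    · have hmx : m i = |y i| - lam := max_eq_left (by linarith)
      have hy0 : y i ≠ 0 := by intro h0; rw [h0] at h; simp at h; linarith
      have hsy : Real.sign (y i) * y i = |y i| := by
        rcases hy0.lt_or_gt with h' | h'
        · rw [Real.sign_of_neg h', abs_of_neg h']; ring
        · rw [Real.sign_of_pos h', abs_of_pos h']; ring
      rw [hzm i, hmx]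
      linear_combination (|y i| - lam) * hsy
  -- sums about z
  have hQ : ∑ i, (m i) ^ 2 = ‖z‖ ^ 2 := by
    rw [hnsq z]
    exact Finset.sum_congr rfl fun i _ => by rw [← sq_abs (z i), hzabs i]
  -- Cauchy-Schwarz: ∑ |x i| * m i ≤ ‖x‖ * ‖z‖
  have hCS : ∀ x : EuclideanSpace ℝ (Fin n), ∑ i, |x i| * m i ≤ ‖x‖ * ‖z‖ := by
    intro x
    have h1 := Real.sum_mul_le_sqrt_mul_sqrt Finset.univ (fun i => |x i|) m
    have h2 : Real.sqrt (∑ i, |x i| ^ 2) = ‖x‖ := by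
      rw [hnsqrt x]
      congr 1
      exact Finset.sum_congr rfl fun i _ => sq_abs _
    have h3 : Real.sqrt (∑ i, (m i) ^ 2) = ‖z‖ := by
      rw [hQ, Real.sqrt_sq (norm_nonneg z)]
    rw [h2, h3] at h1
    exact h1
  -- lower bound for f
  have hlow : ∀ x : EuclideanSpace ℝ (Fin n),
      (1 / 2) * ‖y‖ ^ 2 - (1 / 2) * (lam + ‖z‖) ^ 2 ≤ f x := by
    intro x
    have h1 : ∑ i, (x i * y i - lam * |x i|) ≤ ∑ i, |x i| * m i := by
      refine Finset.sum_le_sum fun i _ => ?_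
      have h2 : x i * y i ≤ |x i| * |y i| := by
        calc x i * y i ≤ |x i * y i| := le_abs_self _
          _ = |x i| * |y i| := abs_mul _ _
      have h3 : |x i| * (|y i| - lam) ≤ |x i| * m i :=
        mul_le_mul_of_nonneg_left (le_max_left _ _) (abs_nonneg _)
      nlinarith
    have h4 : ∑ i, (x i * y i - lam * |x i|) =
        (∑ i, x i * y i) - lam * ∑ i, |x i| := by
      rw [Finset.sum_sub_distrib, Finset.mul_sum]
    have h5 : ‖x - y‖ ^ 2 = ‖x‖ ^ 2 - 2 * ∑ i, x i * y i + ‖y‖ ^ 2 := by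
      rw [hnsq (x - y), hnsq x, hnsq y]
      rw [show (∑ i, ((x - y) i) ^ 2) = ∑ i, (x i ^ 2 - 2 * (x i * y i) + y i ^ 2) from
        Finset.sum_congr rfl fun i _ => by
          show (x i - y i) ^ 2 = _
          ring]
      simp only [Finset.sum_add_distrib, Finset.sum_sub_distrib, ← Finset.mul_sum]
    rw [hf x, h5]
    have h6 := hCS x
    rw [h4] at h1
    nlinarith [sq_nonneg (‖x‖ - ‖z‖ - lam), norm_nonneg x]
  -- value at the candidate point
  obtain ⟨t, ht_def⟩ : ∃ t : ℝ, t = (lam + ‖z‖) / ‖z‖ := ⟨_, rfl⟩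
  have ht0 : 0 ≤ t := by rw [ht_def]; positivity
  have htS : t * ‖z‖ = lam + ‖z‖ := by rw [ht_def]; exact div_mul_cancel₀ _ hS.ne'
  obtain ⟨star, hstar_def⟩ : ∃ star : EuclideanSpace ℝ (Fin n), star = t • z := ⟨_, rfl⟩
  have hstar_i : ∀ i, star i = t * z i := fun i => by rw [hstar_def]; rfl
  have hA3 : ‖star‖ = lam + ‖z‖ := by
    rw [hstar_def, norm_smul, Real.norm_eq_abs, abs_of_nonneg ht0, htS]
  have hA1 : ∑ i, |star i| = t * ∑ i, m i := by
    rw [Finset.mul_sum]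
    refine Finset.sum_congr rfl fun i _ => ?_
    rw [hstar_i i, abs_mul, abs_of_nonneg ht0, hzabs i]
  have hA2 : ∑ i, (star i - y i) ^ 2 =
      t ^ 2 * (∑ i, (m i) ^ 2) - 2 * t * ((∑ i, (m i) ^ 2) + lam * ∑ i, m i)
        + ∑ i, (y i) ^ 2 := by
    have hterm : ∀ i, (star i - y i) ^ 2 =
        t ^ 2 * (m i) ^ 2 - 2 * t * ((m i) ^ 2 + lam * m i) + (y i) ^ 2 := by
      intro i
      have h2 : (z i) ^ 2 = (m i) ^ 2 := by rw [← sq_abs (z i), hzabs i]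
      have h3 := hzy i
      rw [hstar_i i]
      linear_combination t ^ 2 * h2 - 2 * t * h3
    rw [Finset.sum_congr rfl fun i _ => hterm i]
    simp only [Finset.sum_add_distrib, Finset.sum_sub_distrib, ← Finset.mul_sum]
  have hval : f star = (1 / 2) * ‖y‖ ^ 2 - (1 / 2) * (lam + ‖z‖) ^ 2 := by
    have h5 : ‖star - y‖ ^ 2 = ∑ i, (star i - y i) ^ 2 := by
      rw [hnsq (star - y)]
      exact Finset.sum_congr rfl fun i _ => by rfl
    rw [hf star, h5, hA2, hA1, hA3, hQ, ← hnsq y]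
    linear_combination ((1 / 2) * (t * ‖z‖ + lam + ‖z‖) - ‖z‖) * htS
  intro x
  calc f (((lam + ‖z‖) / ‖z‖) • z) = f star := by rw [hstar_def, ht_def]
    _ ≤ f x := by rw [hval]; exact hlow x
end

section
/- DCA monotone decrease: let g, h : ℝⁿ → ℝ ∪ {+∞} be proper convex functions, f = g − h. Suppose yₖ ∈ ∂h(xₖ) and x_{k+1} minimizes x ↦ g(x) − (h(xₖ) + ⟨yₖ, x − xₖ⟩) over ℝⁿ. Then f(x_{k+1}) ≤ f(xₖ). -/
theorem dca_monotone_decrease (n : ℕ)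
    (g h : EuclideanSpace ℝ (Fin n) → ℝ)
    (hg : ConvexOn ℝ Set.univ g) (hh : ConvexOn ℝ Set.univ h)
    (xk xk1 yk : EuclideanSpace ℝ (Fin n))
    (hyk : ∀ x, h x ≥ h xk + (inner ℝ yk (x - xk) : ℝ))
    (hmin : ∀ x, g xk1 - (h xk + (inner ℝ yk (xk1 - xk) : ℝ)) ≤
        g x - (h xk + (inner ℝ yk (x - xk) : ℝ))) :
    g xk1 - h xk1 ≤ g xk - h xk := by
  have h1 := hyk xk1
  have h2 := hmin xk
  rw [sub_self, inner_zero_right] at h2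
  linarith
end

section
/- Optimality implies stationarity for the ℓ1−ℓ2 SFP: let A be a real m×n matrix, Q ⊆ ℝᵐ and C ⊆ ℝⁿ nonempty closed convex, γ > 0, and suppose x* ∈ C with x* ≠ 0 is a local minimizer of F(x) = ½‖(I − P_Q)(Ax)‖₂² + γ(‖x‖₁ − ‖x‖₂) over C. Then 0 ∈ Aᵗ(Ax* − P_Q(Ax*)) + γ(∂‖x*‖₁ − x*/‖x*‖₂) + N_C(x*). -/
open scoped InnerProductSpace Pointwise Topology

/-- Metric projection onto a nonempty closed convex set, with variational inequality. -/
lemma proj_vi {E : Type*} [NormedAddCommGroup E] [InnerProductSpace ℝ E] [CompleteSpace E]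
    {K : Set E} (ne : K.Nonempty) (hcl : IsClosed K) (hcv : Convex ℝ K) (u : E) :
    ∃ v ∈ K, ∀ w ∈ K, ⟪u - v, w - v⟫_ℝ ≤ 0 := by
  obtain ⟨v, hv, heq⟩ := exists_norm_eq_iInf_of_complete_convex ne hcl.isComplete hcv u
  exact ⟨v, hv, (norm_eq_iInf_iff_real_inner_le_zero hcv hv).1 heq⟩

/-- Exact first-order expansion of `|x + t*v|` for small `t > 0`. -/
lemma abs_expand {x v t : ℝ} (ht : 0 < t) (h : x ≠ 0 → t * |v| < |x|) :
    |x + t * v| = |x| + t * (if x = 0 then |v| else (|x| / x) * v) := by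
  by_cases hx : x = 0
  · simp [hx, abs_mul, abs_of_pos ht]
  · rw [if_neg hx]
    have h' := h hx
    have habs : t * v ≤ t * |v| := mul_le_mul_of_nonneg_left (le_abs_self v) ht.le
    have habs' : -(t * |v|) ≤ t * v := by nlinarith [neg_abs_le v]
    rcases lt_or_gt_of_ne hx with hneg | hpos
    · have hxa : |x| = -x := abs_of_neg hneg
      have hlt : x + t * v < 0 := by nlinarith
      rw [abs_of_neg hlt, hxa]
      field_simp
      ring
    · have hxa : |x| = x := abs_of_pos hpos
      have hlt : 0 < x + t * v := by nlinarith
      rw [abs_of_pos hlt, hxa]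
      field_simp

set_option maxHeartbeats 1000000 in
theorem local_min_implies_stationary (m n : ℕ)
    (A : EuclideanSpace ℝ (Fin n) →L[ℝ] EuclideanSpace ℝ (Fin m))
    (Q : Set (EuclideanSpace ℝ (Fin m)))
    (hQne : Q.Nonempty) (hQcl : IsClosed Q) (hQcv : Convex ℝ Q)
    (P : EuclideanSpace ℝ (Fin m) → EuclideanSpace ℝ (Fin m))
    (hP : ∀ x, P x ∈ Q ∧ ∀ z ∈ Q, ‖x - P x‖ ≤ ‖x - z‖)
    (C : Set (EuclideanSpace ℝ (Fin n)))
    (hCne : C.Nonempty) (hCcl : IsClosed C) (hCcv : Convex ℝ C)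
    (γ : ℝ) (hγ : 0 < γ)
    (F : EuclideanSpace ℝ (Fin n) → ℝ)
    (hF : F = fun x => (1 / 2) * ‖A x - P (A x)‖ ^ 2 + γ * ((∑ i, |x i|) - ‖x‖))
    (xs : EuclideanSpace ℝ (Fin n)) (hxsC : xs ∈ C) (hxs0 : xs ≠ 0)
    (hloc : ∃ ε > 0, ∀ y ∈ C, ‖y - xs‖ < ε → F xs ≤ F y) :
    ∃ w : EuclideanSpace ℝ (Fin n),
      (∀ y, (∑ i, |y i|) ≥ (∑ i, |xs i|) + (inner ℝ w (y - xs) : ℝ)) ∧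
      ∃ d : EuclideanSpace ℝ (Fin n),
        (∀ y ∈ C, (inner ℝ d (y - xs) : ℝ) ≤ 0) ∧
        0 = ContinuousLinearMap.adjoint A (A xs - P (A xs)) +
          γ • (w - ‖xs‖⁻¹ • xs) + d := by
  classical
  have hn0 : ‖xs‖ ≠ 0 := norm_ne_zero_iff.mpr hxs0
  set a : EuclideanSpace ℝ (Fin n) := ContinuousLinearMap.adjoint A (A xs - P (A xs)) with ha
  set r : EuclideanSpace ℝ (Fin n) := ‖xs‖⁻¹ • xs with hr
  set g : EuclideanSpace ℝ (Fin n) := a - γ • r with hg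
  set D : EuclideanSpace ℝ (Fin n) → ℝ :=
    fun v => ∑ i, (if xs i = 0 then |v i| else (|xs i| / xs i) * v i) with hD
  have hcoord : ∀ (t : ℝ) (u u' : EuclideanSpace ℝ (Fin n)) (i : Fin n),
      (u + t • u') i = u i + t * u' i := by
    intro t u u' i; simp [PiLp.add_apply, PiLp.smul_apply, smul_eq_mul]
  have hinner : ∀ u u' : EuclideanSpace ℝ (Fin n), ⟪u, u'⟫_ℝ = ∑ i, u i * u' i := by
    intro u u'; simp [PiLp.inner_apply, RCLike.inner_apply]
    exact Finset.sum_congr rfl (fun i _ => mul_comm _ _)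
  ------------------------------------------------------------------
  -- Step 1: directional optimality
  ------------------------------------------------------------------
  have lemA : ∀ y ∈ C, 0 ≤ ⟪g, y - xs⟫_ℝ + γ * D (y - xs) := by
    intro y hy
    set v : EuclideanSpace ℝ (Fin n) := y - xs with hv
    obtain ⟨ε, hε, hmin⟩ := hloc
    have hid : ⟪g, v⟫_ℝ = ⟪a, v⟫_ℝ - γ * ⟪r, v⟫_ℝ := by
      rw [hg, inner_sub_left, real_inner_smul_left]
    have key : ∀ᶠ t in nhdsWithin (0:ℝ) (Set.Ioi 0),
        0 ≤ ⟪g, v⟫_ℝ + γ * D v + t * ((1/2) * ‖A v‖^2) := by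
      have h1 : ∀ᶠ t in nhdsWithin (0:ℝ) (Set.Ioi 0), t ∈ Set.Ioo (0:ℝ) 1 :=
        Filter.eventually_of_mem (Ioo_mem_nhdsGT_of_mem (by constructor <;> norm_num))
          (fun x hx => hx)
      have h2 : ∀ᶠ t in nhdsWithin (0:ℝ) (Set.Ioi 0), t * ‖v‖ < ε := by
        have ht : Filter.Tendsto (fun t : ℝ => t * ‖v‖) (nhdsWithin 0 (Set.Ioi 0)) (𝓝 0) := by
          have h0 : Filter.Tendsto (fun t : ℝ => t * ‖v‖) (𝓝 0) (𝓝 (0 * ‖v‖)) :=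
            (continuous_id.mul continuous_const).tendsto 0
          rw [zero_mul] at h0
          exact h0.mono_left nhdsWithin_le_nhds
        exact ht.eventually_lt_const hε
      have h3 : ∀ᶠ t in nhdsWithin (0:ℝ) (Set.Ioi 0),
          ∀ i, xs i ≠ 0 → t * |v i| < |xs i| := by
        rw [Filter.eventually_all]
        intro i
        by_cases hxi : xs i = 0
        · exact Filter.Eventually.of_forall (fun t h => absurd hxi h)
        · have ht : Filter.Tendsto (fun t : ℝ => t * |v i|)
              (nhdsWithin 0 (Set.Ioi 0)) (𝓝 0) := by
            have h0 : Filter.Tendsto (fun t : ℝ => t * |v i|) (𝓝 0) (𝓝 (0 * |v i|)) :=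
              (continuous_id.mul continuous_const).tendsto 0
            rw [zero_mul] at h0
            exact h0.mono_left nhdsWithin_le_nhds
          exact (ht.eventually_lt_const (abs_pos.mpr hxi)).mono (fun t h _ => h)
      filter_upwards [h1, h2, h3] with t ht1 ht2 ht3
      obtain ⟨ht0, htlt1⟩ := ht1
      have hxtC : xs + t • v ∈ C := by
        have h := hCcv hxsC hy (by linarith : (0:ℝ) ≤ 1 - t) ht0.le (by ring)
        have he : xs + t • v = (1 - t) • xs + t • y := by rw [hv]; module
        rw [he]; exact h
      have hnear : ‖(xs + t • v) - xs‖ < ε := by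
        have he : (xs + t • v) - xs = t • v := by abel
        rw [he, norm_smul, Real.norm_eq_abs, abs_of_pos ht0]
        exact ht2
      have hFF := hmin _ hxtC hnear
      rw [hF] at hFF
      dsimp only at hFF
      -- quadratic part
      have hq1 : ‖A (xs + t • v) - P (A (xs + t • v))‖ ≤ ‖A (xs + t • v) - P (A xs)‖ :=
        (hP _).2 _ (hP (A xs)).1
      have h4 : ⟪a, v⟫_ℝ = ⟪A xs - P (A xs), A v⟫_ℝ :=
        ContinuousLinearMap.adjoint_inner_left A v (A xs - P (A xs))
      have hq2 : ‖A (xs + t • v) - P (A xs)‖^2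
          = ‖A xs - P (A xs)‖^2 + 2 * (t * ⟪a, v⟫_ℝ) + t^2 * ‖A v‖^2 := by
        have he : A (xs + t • v) - P (A xs) = (A xs - P (A xs)) + t • (A v) := by
          rw [map_add, map_smul]; abel
        rw [he, norm_add_sq_real, real_inner_smul_right, norm_smul, h4,
          Real.norm_eq_abs, abs_of_pos ht0]
        ring
      have hq3 : (1/2) * ‖A (xs + t • v) - P (A (xs + t • v))‖^2
          ≤ (1/2) * ‖A xs - P (A xs)‖^2 + t * ⟪a, v⟫_ℝ + t^2 * ((1/2) * ‖A v‖^2) := by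
        have hsq : ‖A (xs + t • v) - P (A (xs + t • v))‖^2
            ≤ ‖A (xs + t • v) - P (A xs)‖^2 := pow_le_pow_left₀ (norm_nonneg _) hq1 2
        rw [hq2] at hsq; linarith
      -- ℓ1 part
      have hl1 : (∑ i, |(xs + t • v) i|) = (∑ i, |xs i|) + t * D v := by
        rw [hD]
        dsimp only
        rw [Finset.mul_sum, ← Finset.sum_add_distrib]
        apply Finset.sum_congr rfl
        intro i _
        rw [hcoord t xs v i]
        exact abs_expand ht0 (fun hxi => ht3 i hxi)
      -- norm part
      have hnm : ‖xs‖ + t * ⟪r, v⟫_ℝ ≤ ‖xs + t • v‖ := by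
        have h5 : ⟪r, xs + t • v⟫_ℝ = ‖xs‖ + t * ⟪r, v⟫_ℝ := by
          rw [inner_add_right, real_inner_smul_right, hr, real_inner_smul_left,
            real_inner_self_eq_norm_mul_norm]
          field_simp
        have h6 := real_inner_le_norm r (xs + t • v)
        have h7 : ‖r‖ = 1 := by
          rw [hr, norm_smul, norm_inv, norm_norm]
          field_simp
        rw [h7, one_mul, h5] at h6
        linarith
      -- assemble
      have hprod : 0 ≤ γ * (‖xs + t • v‖ - (‖xs‖ + t * ⟪r, v⟫_ℝ)) :=
        mul_nonneg hγ.le (by linarith)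
      have h0 : 0 ≤ t * ⟪a, v⟫_ℝ + t^2 * ((1/2) * ‖A v‖^2)
          + γ * (t * D v) - γ * (t * ⟪r, v⟫_ℝ) := by
        nlinarith [hFF, hq3, hl1, hprod]
      have h1' : 0 ≤ t * (⟪g, v⟫_ℝ + γ * D v + t * ((1/2) * ‖A v‖^2)) := by
        rw [hid]; nlinarith [h0]
      have := le_of_mul_le_mul_left
        (by linarith : t * 0 ≤ t * (⟪g, v⟫_ℝ + γ * D v + t * ((1/2) * ‖A v‖^2))) ht0
      linarith
    have htend : Filter.Tendsto
        (fun t : ℝ => ⟪g, v⟫_ℝ + γ * D v + t * ((1/2) * ‖A v‖^2))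
        (nhdsWithin (0:ℝ) (Set.Ioi 0))
        (𝓝 (⟪g, v⟫_ℝ + γ * D v + 0 * ((1/2) * ‖A v‖^2))) :=
      ((continuous_const.add (continuous_id.mul continuous_const)).tendsto 0).mono_left
        nhdsWithin_le_nhds
    have := ge_of_tendsto htend key
    linarith [this]
  ------------------------------------------------------------------
  -- Step 2: homogeneity and continuity of D; extension to the tangent cone
  ------------------------------------------------------------------
  have Dhom : ∀ (t : ℝ), 0 ≤ t → ∀ v, D (t • v) = t * D v := by
    intro t ht v
    rw [hD]
    dsimp only
    rw [Finset.mul_sum]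
    apply Finset.sum_congr rfl
    intro i _
    have hc : (t • v) i = t * v i := by simp [PiLp.smul_apply, smul_eq_mul]
    by_cases h : xs i = 0
    · simp [h, hc, abs_mul, abs_of_nonneg ht]
    · simp only [h, if_false, hc]; ring
  have hDcont : Continuous D := by
    rw [hD]
    apply continuous_finset_sum
    intro i _
    by_cases h : xs i = 0
    · simpa [h] using (EuclideanSpace.proj (𝕜 := ℝ) i).continuous.abs
    · simp only [h, if_false]
      exact continuous_const.mul (EuclideanSpace.proj (𝕜 := ℝ) i).continuous
  set Kraw : Set (EuclideanSpace ℝ (Fin n)) :=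
    {z | ∃ t : ℝ, 0 ≤ t ∧ ∃ y ∈ C, z = t • (y - xs)} with hKrawdef
  have hKrawmem : ∀ z, z ∈ Kraw ↔ ∃ t : ℝ, 0 ≤ t ∧ ∃ y ∈ C, z = t • (y - xs) :=
    fun z => Iff.rfl
  have lemA' : ∀ u ∈ closure Kraw, 0 ≤ ⟪g, u⟫_ℝ + γ * D u := by
    intro u hu
    have hcl : IsClosed {u : EuclideanSpace ℝ (Fin n) | 0 ≤ ⟪g, u⟫_ℝ + γ * D u} :=
      isClosed_le continuous_const
        ((continuous_const.inner continuous_id).add (continuous_const.mul hDcont))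
    have hsub : Kraw ⊆ {u : EuclideanSpace ℝ (Fin n) | 0 ≤ ⟪g, u⟫_ℝ + γ * D u} := by
      rintro z ⟨t, ht, y, hy, rfl⟩
      have h := lemA y hy
      simp only [Set.mem_setOf_eq]
      rw [real_inner_smul_right, Dhom t ht]
      nlinarith [mul_nonneg ht h]
    exact closure_minimal hsub hcl hu
  ------------------------------------------------------------------
  -- Step 3: the sets B, N, S
  ------------------------------------------------------------------
  set Bset : Set (EuclideanSpace ℝ (Fin n)) :=
    {w | ∀ i, |w i| ≤ 1 ∧ w i * xs i = |xs i|} with hBdef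
  set Nset : Set (EuclideanSpace ℝ (Fin n)) :=
    {d | ∀ y ∈ C, ⟪d, y - xs⟫_ℝ ≤ 0} with hNdef
  have hBmem : ∀ w, w ∈ Bset ↔ ∀ i, |w i| ≤ 1 ∧ w i * xs i = |xs i| := fun w => Iff.rfl
  have hNmem : ∀ d, d ∈ Nset ↔ ∀ y ∈ C, ⟪d, y - xs⟫_ℝ ≤ 0 := fun d => Iff.rfl
  set Sset : Set (EuclideanSpace ℝ (Fin n)) := γ • Bset + Nset with hSdef
  have hSmem : ∀ z, z ∈ Sset ↔ ∃ w ∈ Bset, ∃ d ∈ Nset, z = γ • w + d := by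
    intro z
    rw [hSdef, Set.mem_add]
    constructor
    · rintro ⟨_, ⟨w, hw, rfl⟩, d, hd, rfl⟩; exact ⟨w, hw, d, hd, rfl⟩
    · rintro ⟨w, hw, d, hd, rfl⟩; exact ⟨_, ⟨w, hw, rfl⟩, d, hd, rfl⟩
  -- the selection vector
  have hwsel : ∀ u : EuclideanSpace ℝ (Fin n),
      ∃ w ∈ Bset, ⟪u, w⟫_ℝ = D u := by
    intro u
    refine ⟨WithLp.toLp 2 (fun i => if xs i = 0 then (if 0 ≤ u i then 1 else -1) else |xs i| / xs i :
      Fin n → ℝ), ?_, ?_⟩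
    · intro i
      by_cases h : xs i = 0
      · constructor
        · simp only [PiLp.toLp_apply, h, if_true]
          split_ifs <;> norm_num
        · simp [h]
      · constructor
        · simp only [PiLp.toLp_apply, h, if_false]
          rw [abs_div, abs_abs]
          rw [div_self (abs_ne_zero.mpr h)]
        · simp only [PiLp.toLp_apply, h, if_false]
          field_simp
    · rw [hinner, hD]
      dsimp only
      apply Finset.sum_congr rfl
      intro i _
      by_cases h : xs i = 0
      · simp only [PiLp.toLp_apply, h, if_true]
        by_cases hu : 0 ≤ u i
        · rw [if_pos hu, abs_of_nonneg hu]; ring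
        · rw [if_neg hu, abs_of_neg (not_le.mp hu)]; ring
      · simp only [PiLp.toLp_apply, h, if_false]; ring
  -- subgradient inequality for members of B
  have hBsubgrad : ∀ w ∈ Bset, ∀ y : EuclideanSpace ℝ (Fin n),
      (∑ i, |y i|) ≥ (∑ i, |xs i|) + ⟪w, y - xs⟫_ℝ := by
    intro w hw y
    have hsubc : (y - xs : EuclideanSpace ℝ (Fin n)) = y + (-1 : ℝ) • xs := by module
    have hin : ⟪w, y - xs⟫_ℝ = ∑ i, w i * (y i - xs i) := by
      rw [hinner]
      apply Finset.sum_congr rfl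
      intro i _
      rw [hsubc, hcoord]
      ring
    have hterm : ∀ i ∈ Finset.univ, w i * (y i - xs i) ≤ |y i| - |xs i| := by
      intro i _
      have h1 := (hw i).1
      have h2 := (hw i).2
      have h3 : w i * y i ≤ |y i| := by
        calc w i * y i ≤ |w i * y i| := le_abs_self _
          _ = |w i| * |y i| := abs_mul _ _
          _ ≤ 1 * |y i| := mul_le_mul_of_nonneg_right h1 (abs_nonneg _)
          _ = |y i| := one_mul _
      nlinarith
    have hsum := Finset.sum_le_sum hterm
    rw [Finset.sum_sub_distrib] at hsum
    rw [hin]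
    linarith
  -- topological properties
  have hBcl : IsClosed Bset := by
    have he : Bset = ⋂ i, ({w : EuclideanSpace ℝ (Fin n) | |w i| ≤ 1}
        ∩ {w : EuclideanSpace ℝ (Fin n) | w i * xs i = |xs i|}) := by
      ext w
      simp only [hBdef, Set.mem_setOf_eq, Set.mem_iInter, Set.mem_inter_iff]
    rw [he]
    refine isClosed_iInter fun i => IsClosed.inter ?_ ?_
    · exact isClosed_le (EuclideanSpace.proj (𝕜 := ℝ) i).continuous.abs continuous_const
    · exact isClosed_eq ((EuclideanSpace.proj (𝕜 := ℝ) i).continuous.mul continuous_const)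
        continuous_const
  have hBcpt : IsCompact Bset := by
    refine (isCompact_closedBall (0 : EuclideanSpace ℝ (Fin n)) (Real.sqrt n)).of_isClosed_subset
      hBcl ?_
    intro w hw
    rw [Metric.mem_closedBall, dist_zero_right, EuclideanSpace.norm_eq]
    apply Real.sqrt_le_sqrt
    calc ∑ i, ‖w i‖^2 ≤ ∑ _i : Fin n, (1:ℝ) := Finset.sum_le_sum (fun i _ => by
          have := (hw i).1
          rw [Real.norm_eq_abs]
          nlinarith [abs_nonneg (w i)])
      _ = n := by simp
  have hBcv : Convex ℝ Bset := by
    intro w hw w' hw' c c' hc hc' hcc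
    intro i
    have hco : (c • w + c' • w') i = c * w i + c' * w' i := by
      simp [PiLp.add_apply, PiLp.smul_apply, smul_eq_mul]
    constructor
    · rw [hco]
      calc |c * w i + c' * w' i| ≤ |c * w i| + |c' * w' i| := abs_add_le _ _
        _ = c * |w i| + c' * |w' i| := by rw [abs_mul, abs_mul, abs_of_nonneg hc,
              abs_of_nonneg hc']
        _ ≤ c * 1 + c' * 1 := by
            have h1 := (hw i).1
            have h2 := (hw' i).1
            gcongr
        _ = 1 := by rw [mul_one, mul_one, hcc]
    · rw [hco]
      have h2 := (hw i).2
      have h2' := (hw' i).2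
      have : (c * w i + c' * w' i) * xs i = c * (w i * xs i) + c' * (w' i * xs i) := by ring
      rw [this, h2, h2']
      rw [← add_mul, hcc, one_mul]
  have hNcl : IsClosed Nset := by
    have he : Nset = ⋂ y ∈ C, {d : EuclideanSpace ℝ (Fin n) | ⟪d, y - xs⟫_ℝ ≤ 0} := by
      ext d
      simp only [hNdef, Set.mem_setOf_eq, Set.mem_iInter]
    rw [he]
    exact isClosed_biInter fun y _ =>
      isClosed_le (continuous_id.inner continuous_const) continuous_const
  have hNcv : Convex ℝ Nset := by
    intro d hd d' hd' c c' hc hc' _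
    intro y hy
    rw [inner_add_left, real_inner_smul_left, real_inner_smul_left]
    have := hd y hy
    have := hd' y hy
    nlinarith
  have hN0 : (0 : EuclideanSpace ℝ (Fin n)) ∈ Nset := by
    intro y hy
    rw [inner_zero_left]
  have hNadd : ∀ d₁ ∈ Nset, ∀ d₂ ∈ Nset, d₁ + d₂ ∈ Nset := by
    intro d₁ h₁ d₂ h₂ y hy
    rw [inner_add_left]
    linarith [h₁ y hy, h₂ y hy]
  have hScl : IsClosed Sset := by
    have hcpt : IsCompact (γ • Bset) := by
      rw [← Set.image_smul]
      exact hBcpt.image (continuous_const_smul γ)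
    exact hNcl.add_left_of_isCompact hcpt
  have hScv : Convex ℝ Sset := (hBcv.smul γ).add hNcv
  have hSne : Sset.Nonempty := by
    obtain ⟨w₀, hw₀, _⟩ := hwsel 0
    exact ⟨γ • w₀ + 0, (hSmem _).2 ⟨w₀, hw₀, 0, hN0, rfl⟩⟩
  ------------------------------------------------------------------
  -- Step 4: conclusion
  ------------------------------------------------------------------
  by_cases hmem : -g ∈ Sset
  · obtain ⟨w, hwB, d, hdN, heq⟩ := (hSmem _).1 hmem
    refine ⟨w, fun y => hBsubgrad w hwB y, d, fun y hy => hdN y hy, ?_⟩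
    have he : a + γ • (w - r) + d = g + (γ • w + d) := by
      rw [hg, smul_sub]; abel
    rw [he, ← heq]
    simp
  · exfalso
    obtain ⟨p, hpS, hVI⟩ := proj_vi hSne hScl hScv (-g)
    set v : EuclideanSpace ℝ (Fin n) := -g - p with hvdef
    have hvne : v ≠ 0 := sub_ne_zero.mpr (fun h => hmem (h ▸ hpS))
    obtain ⟨w₁, hw₁, d₁, hd₁, hpeq⟩ := (hSmem p).1 hpS
    have hα : ∀ d ∈ Nset, ⟪v, d⟫_ℝ ≤ 0 := by
      intro d hd
      have hz : γ • w₁ + (d₁ + d) ∈ Sset :=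
        (hSmem _).2 ⟨w₁, hw₁, d₁ + d, hNadd d₁ hd₁ d hd, rfl⟩
      have h := hVI _ hz
      have he : (γ • w₁ + (d₁ + d)) - p = d := by rw [hpeq]; abel
      rwa [he] at h
    have hd₁nn : 0 ≤ ⟪v, d₁⟫_ℝ := by
      have hz : γ • w₁ + 0 ∈ Sset := (hSmem _).2 ⟨w₁, hw₁, 0, hN0, rfl⟩
      have h := hVI _ hz
      have he : (γ • w₁ + 0) - p = -d₁ := by rw [hpeq]; abel
      rw [he, inner_neg_right] at h
      linarith
    have hwle : ∀ w ∈ Bset, ⟪v, w⟫_ℝ ≤ ⟪v, w₁⟫_ℝ := by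
      intro w hw
      have hz : γ • w + d₁ ∈ Sset := (hSmem _).2 ⟨w, hw, d₁, hd₁, rfl⟩
      have h := hVI _ hz
      have he : (γ • w + d₁) - p = γ • (w - w₁) := by rw [hpeq, smul_sub]; abel
      rw [he, real_inner_smul_right] at h
      have h' : ⟪v, w - w₁⟫_ℝ ≤ 0 :=
        le_of_mul_le_mul_left (by linarith : γ * ⟪v, w - w₁⟫_ℝ ≤ γ * 0) hγ
      rw [inner_sub_right] at h'
      linarith
    -- v belongs to the closed tangent cone
    have hKrawcv : Convex ℝ Kraw := by
      rintro z₁ ⟨t₁, ht₁, y₁, hy₁, rfl⟩ z₂ ⟨t₂, ht₂, y₂, hy₂, rfl⟩ c₁ c₂ hc₁ hc₂ hcc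
      by_cases hs0 : c₁ * t₁ + c₂ * t₂ = 0
      · have h1 : c₁ * t₁ = 0 ∧ c₂ * t₂ = 0 := by
          constructor <;> nlinarith [mul_nonneg hc₁ ht₁, mul_nonneg hc₂ ht₂]
        refine ⟨0, le_refl 0, xs, hxsC, ?_⟩
        rw [smul_smul, smul_smul, h1.1, h1.2]
        simp
      · have hspos : 0 < c₁ * t₁ + c₂ * t₂ :=
          lt_of_le_of_ne (by positivity) (Ne.symm hs0)
        refine ⟨c₁ * t₁ + c₂ * t₂, hspos.le,
          (c₁ * t₁ / (c₁ * t₁ + c₂ * t₂)) • y₁ + (c₂ * t₂ / (c₁ * t₁ + c₂ * t₂)) • y₂,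
          hCcv hy₁ hy₂ (by positivity) (by positivity) (by field_simp), ?_⟩
        match_scalars <;> field_simp <;> ring
    have hKcne : (closure Kraw).Nonempty :=
      ⟨0, subset_closure ⟨0, le_refl 0, xs, hxsC, by simp⟩⟩
    have hKscale : ∀ c : ℝ, 0 ≤ c → ∀ k ∈ closure Kraw, c • k ∈ closure Kraw := by
      intro c hc k hk
      have himg : (fun z : EuclideanSpace ℝ (Fin n) => c • z) '' Kraw ⊆ Kraw := by
        rintro _ ⟨z, ⟨t, ht, y, hy, rfl⟩, rfl⟩
        exact ⟨c * t, mul_nonneg hc ht, y, hy, smul_smul c t _⟩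
      have h1 : c • k ∈ closure ((fun z : EuclideanSpace ℝ (Fin n) => c • z) '' Kraw) :=
        image_closure_subset_closure_image (continuous_const_smul c) ⟨k, hk, rfl⟩
      exact closure_mono himg h1
    obtain ⟨q, hqK, hVI2⟩ := proj_vi hKcne isClosed_closure hKrawcv.closure v
    have hperp : ⟪v - q, q⟫_ℝ = 0 := by
      have h2 := hVI2 _ (hKscale 2 (by norm_num) q hqK)
      have h3 := hVI2 _ (hKscale (1/2 : ℝ) (by norm_num) q hqK)
      have e2 : (2:ℝ) • q - q = q := by module
      have e3 : (1/2 : ℝ) • q - q = -((1/2 : ℝ) • q) := by module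
      rw [e2] at h2
      rw [e3, inner_neg_right, real_inner_smul_right] at h3
      linarith
    have hdN2 : v - q ∈ Nset := by
      intro y hy
      have hk : y - xs ∈ closure Kraw :=
        subset_closure ⟨1, zero_le_one, y, hy, (one_smul _ _).symm⟩
      have h := hVI2 _ hk
      rw [inner_sub_right, hperp] at h
      linarith
    have hveq : v = q := by
      have h1 := hα _ hdN2
      have h2 : ⟪v, v - q⟫_ℝ = ⟪v - q, v - q⟫_ℝ + ⟪q, v - q⟫_ℝ := by
        rw [← inner_add_left, sub_add_cancel]
      have h3 : ⟪q, v - q⟫_ℝ = 0 := by rw [real_inner_comm]; exact hperp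
      have h4 : ⟪v - q, v - q⟫_ℝ ≤ 0 := by rw [h2, h3] at h1; linarith
      have h5 : v - q = 0 := real_inner_self_nonpos.1 h4
      exact sub_eq_zero.1 h5
    have hvK : v ∈ closure Kraw := hveq ▸ hqK
    have hphi := lemA' v hvK
    obtain ⟨ws, hwsB, hwsD⟩ := hwsel v
    have h5 : D v ≤ ⟪v, w₁⟫_ℝ := by rw [← hwsD]; exact hwle _ hwsB
    have h6 : ⟪v, p⟫_ℝ = γ * ⟪v, w₁⟫_ℝ + ⟪v, d₁⟫_ℝ := by
      rw [hpeq, inner_add_right, real_inner_smul_right]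
    have hgv : ⟪g, v⟫_ℝ = -(⟪v, v⟫_ℝ + ⟪v, p⟫_ℝ) := by
      have hvp : -g = v + p := by rw [hvdef]; abel
      calc ⟪g, v⟫_ℝ = ⟪v, g⟫_ℝ := real_inner_comm _ _
        _ = -⟪v, -g⟫_ℝ := by rw [inner_neg_right]; ring
        _ = -⟪v, v + p⟫_ℝ := by rw [← hvp]
        _ = -(⟪v, v⟫_ℝ + ⟪v, p⟫_ℝ) := by rw [inner_add_right]
    have hvv : 0 < ⟪v, v⟫_ℝ := by
      have hnv : 0 < ‖v‖ := norm_pos_iff.mpr hvne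
      rw [real_inner_self_eq_norm_mul_norm]
      exact mul_pos hnv hnv
    nlinarith [mul_le_mul_of_nonneg_left h5 hγ.le]
end
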